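/- Multi-state approximate conversion in a convex resource theory via minimax (Proposition 5). Let A, B be finite types, let O be a nonempty, convex, compact set of quantum channels A → B (compact in the finite-dimensional space of linear maps Matrix A A ℂ →ₗ[ℂ] Matrix B B ℂ), let Λ be a compact topological space, let μ ↦ ρ_μ be a continuous family of states on A and μ ↦ φ_μ a continuous family of unit vectors on B, and let 0 ≤ ε ≤ 1. Then there exists a single channel E ∈ O with (star φ_μ ⬝ᵥ (E ρ_μ).mulVec φ_μ).re ≥ 1 − ε for all μ ∈ Λ, if and only if for every Borel probability measure p on Λ, sSup {∫ μ, (star φ_μ ⬝ᵥ (E ρ_μ).mulVec φ_μ).re ∂p | E ∈ O} ≥ 1 − ε. -/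

import Mathlib

open scoped Kronecker ComplexOrder
open Matrix MeasureTheory

noncomputable section

/-- Choi matrix of a linear map on matrices. -/
def choiMatrix {A B : Type*} [Fintype A] [DecidableEq A] [Fintype B]
    (E : Matrix A A ℂ →ₗ[ℂ] Matrix B B ℂ) : Matrix (A × B) (A × B) ℂ :=
  ∑ i, ∑ j, (Matrix.single i j (1 : ℂ)) ⊗ₖ E (Matrix.single i j 1)

/-- A linear map is a quantum channel if it is trace-preserving and its Choi matrix is PSD. -/
def IsQuantumChannel {A B : Type*} [Fintype A] [DecidableEq A] [Fintype B]
    (E : Matrix A A ℂ →ₗ[ℂ] Matrix B B ℂ) : Prop :=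
  (∀ X, (E X).trace = X.trace) ∧ (choiMatrix E).PosSemidef

/-- A state: positive semidefinite with unit trace. -/
def IsState {S : Type*} [Fintype S] (ρ : Matrix S S ℂ) : Prop := ρ.PosSemidef ∧ ρ.trace = 1

/-- A unit vector. -/
def IsUnitVector {S : Type*} [Fintype S] (ψ : S → ℂ) : Prop := ∑ s, ‖ψ s‖ ^ 2 = 1

/-- The pure state (rank-one projector) of a vector. -/
def pureState {S : Type*} (ψ : S → ℂ) : Matrix S S ℂ := Matrix.vecMulVec ψ (star ψ)

/-! ### Auxiliary lemmas -/

/-- the quadratic form `M ↦ ⟨v, M v⟩` as a linear map -/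
def quadForm {B : Type*} [Fintype B] (v : B → ℂ) : Matrix B B ℂ →ₗ[ℂ] ℂ where
  toFun M := star v ⬝ᵥ M.mulVec v
  map_add' M N := by simp [Matrix.add_mulVec, dotProduct_add]
  map_smul' c M := by simp [Matrix.smul_mulVec]

lemma dot_expand {n : Type*} [Fintype n] (M : Matrix n n ℂ) (w : n → ℂ) :
    star w ⬝ᵥ M.mulVec w = ∑ p, ∑ q, star (w p) * M p q * w q := by
  simp [dotProduct, mulVec, Finset.mul_sum, mul_assoc]

lemma choi_apply {A B : Type*} [Fintype A] [DecidableEq A] [Fintype B]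
    (E : Matrix A A ℂ →ₗ[ℂ] Matrix B B ℂ) (i j : A) (k l : B) :
    choiMatrix E (i, k) (j, l) = E (Matrix.single i j 1) k l := by
  simp [choiMatrix, Matrix.sum_apply, Matrix.single, Matrix.kroneckerMap_apply,
    ite_and, Finset.sum_ite_eq, Finset.sum_ite_eq']

lemma sum_reorder {ia ii ik ij il : Type*} [Fintype ia] [Fintype ii] [Fintype ik]
    [Fintype ij] [Fintype il] (F : ia → ii → ik → ij → il → ℂ) :
    ∑ a, ∑ i, ∑ k, ∑ j, ∑ l, F a i k j l = ∑ i, ∑ j, ∑ a, ∑ k, ∑ l, F a i k j l := by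
  rw [Finset.sum_comm]
  refine Finset.sum_congr rfl fun i _ => ?_
  rw [show ∑ a, ∑ k, ∑ j, ∑ l, F a i k j l = ∑ a, ∑ j, ∑ k, ∑ l, F a i k j l from
    Finset.sum_congr rfl fun a _ => Finset.sum_comm]
  exact Finset.sum_comm

open scoped MatrixOrder in
lemma psd_eq_ct_mul {n : Type*} [Fintype n] [DecidableEq n] {X : Matrix n n ℂ}
    (hX : X.PosSemidef) : ∃ B : Matrix n n ℂ, X = Bᴴ * B := by
  obtain ⟨B, hB⟩ := CStarAlgebra.nonneg_iff_eq_star_mul_self.mp hX.nonneg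
  exact ⟨B, hB⟩

lemma choi_quad_nonneg {A B : Type*} [Fintype A] [DecidableEq A] [Fintype B] [DecidableEq B]
    (E : Matrix A A ℂ →ₗ[ℂ] Matrix B B ℂ) (hC : (choiMatrix E).PosSemidef)
    {X : Matrix A A ℂ} (hX : X.PosSemidef) (v : B → ℂ) :
    0 ≤ star v ⬝ᵥ (E X).mulVec v := by
  obtain ⟨Bm, rfl⟩ := psd_eq_ct_mul hX
  have key : star v ⬝ᵥ (E (Bmᴴ * Bm)).mulVec v
      = ∑ a, star (fun p : A × B => Bm a p.1 * v p.2) ⬝ᵥ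
          (choiMatrix E).mulVec (fun p : A × B => Bm a p.1 * v p.2) := by
    have hEX : E (Bmᴴ * Bm) = ∑ i, ∑ j, (Bmᴴ * Bm) i j • E (Matrix.single i j 1) := by
      conv_lhs => rw [matrix_eq_sum_single (Bmᴴ * Bm)]
      rw [map_sum]
      refine Finset.sum_congr rfl fun i _ => ?_
      rw [map_sum]
      refine Finset.sum_congr rfl fun j _ => ?_
      rw [show Matrix.single i j ((Bmᴴ * Bm) i j)
          = (Bmᴴ * Bm) i j • Matrix.single i j 1 by
        rw [Matrix.smul_single, smul_eq_mul, mul_one], LinearMap.map_smul]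
    have L1 : star v ⬝ᵥ (E (Bmᴴ * Bm)).mulVec v
        = ∑ i, ∑ j, (Bmᴴ * Bm) i j * (star v ⬝ᵥ (E (Matrix.single i j 1)).mulVec v) := by
      show quadForm v (E (Bmᴴ * Bm)) = _
      rw [hEX, map_sum]
      refine Finset.sum_congr rfl fun i _ => ?_
      rw [map_sum]
      exact Finset.sum_congr rfl fun j _ => by rw [LinearMap.map_smul, smul_eq_mul]; rfl
    rw [L1]
    have R1 : ∀ a, star (fun p : A × B => Bm a p.1 * v p.2) ⬝ᵥ
          (choiMatrix E).mulVec (fun p : A × B => Bm a p.1 * v p.2)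
        = ∑ i, ∑ k, ∑ j, ∑ l, (star (Bm a i) * star (v k)) *
            (E (Matrix.single i j 1) k l) * (Bm a j * v l) := by
      intro a
      rw [dot_expand]
      rw [Fintype.sum_prod_type]
      refine Finset.sum_congr rfl fun i _ => ?_
      refine Finset.sum_congr rfl fun k _ => ?_
      rw [Fintype.sum_prod_type]
      refine Finset.sum_congr rfl fun j _ => ?_
      refine Finset.sum_congr rfl fun l _ => ?_
      rw [choi_apply]
      simp [mul_comm, mul_assoc, mul_left_comm]
    simp only [R1]
    rw [sum_reorder]
    refine Finset.sum_congr rfl fun i _ => ?_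
    refine Finset.sum_congr rfl fun j _ => ?_
    rw [dot_expand, show (Bmᴴ * Bm) i j = ∑ a, star (Bm a i) * Bm a j by
      simp [Matrix.mul_apply, Matrix.conjTranspose_apply]]
    rw [Finset.sum_mul]
    refine Finset.sum_congr rfl fun a _ => ?_
    rw [Finset.mul_sum]
    refine Finset.sum_congr rfl fun k _ => ?_
    rw [Finset.mul_sum]
    refine Finset.sum_congr rfl fun l _ => ?_
    ring
  rw [key]
  exact Finset.sum_nonneg fun a _ => hC.dotProduct_mulVec_nonneg _

lemma star_mul_self_eq {z : ℂ} : star z * z = ((‖z‖ ^ 2 : ℝ) : ℂ) := by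
  rw [Complex.star_def, mul_comm, Complex.mul_conj]
  norm_cast
  simp [Complex.sq_norm]

lemma quad_le_trace {B : Type*} [Fintype B] [DecidableEq B] (M : Matrix B B ℂ)
    (hM : ∀ v, 0 ≤ star v ⬝ᵥ M.mulVec v) (φ0 : B → ℂ) (hφ0 : ∑ s, ‖φ0 s‖ ^ 2 = 1) :
    (star φ0 ⬝ᵥ M.mulVec φ0).re ≤ M.trace.re := by
  set P : Matrix B B ℂ := vecMulVec φ0 (star φ0) with hP
  have hNpsd : ((1 : Matrix B B ℂ) - P).PosSemidef := by
    rw [posSemidef_iff_dotProduct_mulVec]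
    constructor
    · have hPh : Pᴴ = P := by
        ext i j
        simp [hP, vecMulVec_apply, conjTranspose_apply, mul_comm]
      rw [Matrix.IsHermitian, conjTranspose_sub, conjTranspose_one, hPh]
    · intro u
      have hPu : P.mulVec u = fun i => φ0 i * (star φ0 ⬝ᵥ u) := by
        ext i
        simp [hP, mulVec, vecMulVec_apply, dotProduct, Finset.mul_sum, mul_assoc]
      set c : ℂ := star φ0 ⬝ᵥ u with hc
      have h1 : star u ⬝ᵥ ((1 : Matrix B B ℂ) - P).mulVec u
          = star u ⬝ᵥ u - star u ⬝ᵥ φ0 * c := by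
        rw [Matrix.sub_mulVec, dotProduct_sub, Matrix.one_mulVec, hPu]
        congr 1
        simp [dotProduct, Finset.sum_mul, mul_assoc]
      have h2 : star u ⬝ᵥ φ0 = star c := by
        rw [hc]
        simp only [dotProduct, Complex.star_def, map_sum]
        refine Finset.sum_congr rfl fun i _ => ?_
        simp [Pi.star_apply, Complex.star_def, mul_comm]
      have h3 : star u ⬝ᵥ u = ((∑ i, ‖u i‖ ^ 2 : ℝ) : ℂ) := by
        push_cast
        simp only [dotProduct, Pi.star_apply]
        exact Finset.sum_congr rfl fun i _ => by rw [star_mul_self_eq]; norm_cast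
      have hcs : ‖c‖ ^ 2 ≤ ∑ i, ‖u i‖ ^ 2 := by
        set x : EuclideanSpace ℂ B := WithLp.toLp 2 φ0 with hx
        set y : EuclideanSpace ℂ B := WithLp.toLp 2 u with hy
        have hinner : (inner ℂ x y : ℂ) = c := by
          simp [hc, PiLp.inner_apply, dotProduct, hx, hy, Pi.star_apply, mul_comm]
        have hxn : ‖x‖ ^ 2 = 1 := by
          rw [EuclideanSpace.norm_eq, Real.sq_sqrt (Finset.sum_nonneg fun i _ => sq_nonneg _)]
          simpa using hφ0
        have hyn : ‖y‖ ^ 2 = ∑ i, ‖u i‖ ^ 2 := by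
          rw [EuclideanSpace.norm_eq, Real.sq_sqrt (Finset.sum_nonneg fun i _ => sq_nonneg _)]
        have := norm_inner_le_norm (𝕜 := ℂ) x y
        rw [hinner] at this
        calc ‖c‖ ^ 2 ≤ (‖x‖ * ‖y‖) ^ 2 := by
              apply pow_le_pow_left₀ (norm_nonneg _) this
          _ = ‖x‖ ^ 2 * ‖y‖ ^ 2 := by ring
          _ = ∑ i, ‖u i‖ ^ 2 := by rw [hxn, hyn, one_mul]
      rw [h1, h2, h3, star_mul_self_eq]
      rw [← Complex.ofReal_sub, Complex.zero_le_real]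
      linarith
  obtain ⟨Bm, hBm⟩ := psd_eq_ct_mul hNpsd
  have htr : (M * ((1 : Matrix B B ℂ) - P)).trace
      = ∑ k, star (fun i => star (Bm k i)) ⬝ᵥ M.mulVec (fun i => star (Bm k i)) := by
    rw [hBm, show M * (Bmᴴ * Bm) = (M * Bmᴴ) * Bm from (mul_assoc _ _ _).symm,
      trace_mul_comm]
    simp only [trace, diag_apply, mul_apply, dotProduct, mulVec, conjTranspose_apply,
      Finset.mul_sum, Pi.star_apply, star_star]
  have h1 : 0 ≤ (M * ((1 : Matrix B B ℂ) - P)).trace := by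
    rw [htr]; exact Finset.sum_nonneg fun k _ => hM _
  have h2 : (M * P).trace = star φ0 ⬝ᵥ M.mulVec φ0 := by
    simp only [trace, diag_apply, mul_apply, hP, vecMulVec_apply, dotProduct, mulVec,
      Pi.star_apply, Finset.mul_sum]
    refine Finset.sum_congr rfl fun i _ => ?_
    refine Finset.sum_congr rfl fun j _ => ?_
    ring
  have h3 : M.trace = (M * P).trace + (M * ((1 : Matrix B B ℂ) - P)).trace := by
    rw [← trace_add, ← mul_add]
    simp
  have h1re : 0 ≤ (M * ((1 : Matrix B B ℂ) - P)).trace.re := (Complex.le_def.mp h1).1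
  have := congrArg Complex.re h3
  rw [Complex.add_re, h2] at this
  linarith

/-- the fidelity of a channel output with a unit vector is at most 1. -/
lemma fid_le_one {A B : Type*} [Fintype A] [DecidableEq A] [Fintype B] [DecidableEq B]
    {E : Matrix A A ℂ →ₗ[ℂ] Matrix B B ℂ} (hE : IsQuantumChannel E)
    {ρ0 : Matrix A A ℂ} (hρ0 : IsState ρ0) {φ0 : B → ℂ} (hφ0 : IsUnitVector φ0) :
    (star φ0 ⬝ᵥ (E ρ0).mulVec φ0).re ≤ 1 := by
  have h := quad_le_trace (E ρ0) (fun v => choi_quad_nonneg E hE.2 hρ0.1 v) φ0 hφ0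
  rwa [hE.1 ρ0, hρ0.2, Complex.one_re] at h

lemma integrable_of_cont {X : Type*} [TopologicalSpace X] [CompactSpace X] [MeasurableSpace X]
    [OpensMeasurableSpace X] (f : X → ℝ) (hf : Continuous f) (ν : Measure X)
    [IsFiniteMeasure ν] : Integrable f ν := by
  obtain ⟨C, hC⟩ := (isCompact_range hf.norm).bddAbove
  exact Integrable.mono' (integrable_const C) hf.aestronglyMeasurable
    (Filter.Eventually.of_forall fun x => hC ⟨x, rfl⟩)

/-- **Proposition 5 (Multi-state approximate conversion via minimax).**
There is a single free channel converting every `ρ_μ` to within fidelity `1 - ε` of the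
pure state of `φ_μ` iff for every Borel probability measure `p` on `Λ` the supremum over
free channels of the `p`-averaged fidelity is at least `1 - ε`. -/
theorem multi_state_conversion_minimax
    {A B : Type*} [Fintype A] [DecidableEq A] [Fintype B] [DecidableEq B]
    (O : Set (Matrix A A ℂ →ₗ[ℂ] Matrix B B ℂ))
    (hne : O.Nonempty) (hconv : Convex ℝ O)
    (hcpt : IsCompact (DFunLike.coe '' O : Set (Matrix A A ℂ → Matrix B B ℂ)))
    (hch : ∀ E ∈ O, IsQuantumChannel E)
    {Λ : Type*} [TopologicalSpace Λ] [CompactSpace Λ] [MeasurableSpace Λ] [BorelSpace Λ]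
    (ρ : Λ → Matrix A A ℂ) (hρ : ∀ μ, IsState (ρ μ)) (hρc : Continuous ρ)
    (φ : Λ → B → ℂ) (hφ : ∀ μ, IsUnitVector (φ μ)) (hφc : Continuous φ)
    (ε : ℝ) (hε0 : 0 ≤ ε) (hε1 : ε ≤ 1) :
    (∃ E ∈ O, ∀ μ, (star (φ μ) ⬝ᵥ (E (ρ μ)).mulVec (φ μ)).re ≥ 1 - ε) ↔
      ∀ p : Measure Λ, IsProbabilityMeasure p →
        sSup {r : ℝ | ∃ E ∈ O,
          r = ∫ μ, (star (φ μ) ⬝ᵥ (E (ρ μ)).mulVec (φ μ)).re ∂p} ≥ 1 - ε := by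
  -- the fidelity function
  set F : (Matrix A A ℂ →ₗ[ℂ] Matrix B B ℂ) → Λ → ℝ :=
    fun E μ => (star (φ μ) ⬝ᵥ (E (ρ μ)).mulVec (φ μ)).re with hF
  have hFcont : ∀ E : Matrix A A ℂ →ₗ[ℂ] Matrix B B ℂ, Continuous (F E) := by
    intro E'
    have hE' : Continuous ⇑E' := E'.continuous_of_finiteDimensional
    have : Continuous fun μ => star (φ μ) ⬝ᵥ (E' (ρ μ)).mulVec (φ μ) := by
      simp only [dotProduct, mulVec, Pi.star_apply]
      refine continuous_finset_sum _ fun k _ => Continuous.mul ?_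
        (continuous_finset_sum _ fun l _ => Continuous.mul ?_ ?_)
      · exact continuous_star.comp ((continuous_apply k).comp hφc)
      · exact (continuous_apply l).comp ((continuous_apply k).comp (hE'.comp hρc))
      · exact (continuous_apply l).comp hφc
    exact Complex.continuous_re.comp this
  have hFle : ∀ E ∈ O, ∀ μ, F E μ ≤ 1 := fun E hE μ => fid_le_one (hch E hE) (hρ μ) (hφ μ)
  constructor
  · rintro ⟨E, hEO, hE⟩ p hp
    have hintE : Integrable (F E) p := integrable_of_cont _ (hFcont E) p
    have hmem : (∫ μ, F E μ ∂p) ∈ {r : ℝ | ∃ E ∈ O,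
        r = ∫ μ, (star (φ μ) ⬝ᵥ (E (ρ μ)).mulVec (φ μ)).re ∂p} := ⟨E, hEO, rfl⟩
    have hbdd : BddAbove {r : ℝ | ∃ E ∈ O,
        r = ∫ μ, (star (φ μ) ⬝ᵥ (E (ρ μ)).mulVec (φ μ)).re ∂p} := by
      refine ⟨1, ?_⟩
      rintro r ⟨E', hE', rfl⟩
      calc ∫ μ, F E' μ ∂p ≤ ∫ _, (1 : ℝ) ∂p :=
            integral_mono (integrable_of_cont _ (hFcont E') p) (integrable_const 1)
              (fun μ => hFle E' hE' μ)
        _ = 1 := by simp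
    have h1 : (1 - ε : ℝ) ≤ ∫ μ, F E μ ∂p := by
      calc (1 - ε : ℝ) = ∫ _, (1 - ε : ℝ) ∂p := by simp
        _ ≤ ∫ μ, F E μ ∂p := integral_mono (integrable_const _) hintE (fun μ => hE μ)
    exact le_trans h1 (le_csSup hbdd hmem)
  · intro H
    classical
    by_contra hno
    push_neg at hno
    -- every channel fails at some point
    have hno' : ∀ E ∈ O, ∃ μ, F E μ < 1 - ε := by
      intro E hE
      obtain ⟨μ, hμ⟩ := hno E hE
      exact ⟨μ, by simpa [hF] using hμ⟩
    -- open cover of the compact set of channels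
    set G : Set (Matrix A A ℂ → Matrix B B ℂ) := DFunLike.coe '' O with hG
    set U : Λ → Set (Matrix A A ℂ → Matrix B B ℂ) :=
      fun μ0 => (fun g => (star (φ μ0) ⬝ᵥ (g (ρ μ0)).mulVec (φ μ0)).re) ⁻¹' Set.Iio (1 - ε)
      with hU
    have hUopen : ∀ μ0, IsOpen (U μ0) := by
      intro μ0
      apply IsOpen.preimage _ isOpen_Iio
      refine Complex.continuous_re.comp ?_
      exact ((quadForm (φ μ0)).continuous_of_finiteDimensional).comp
        (continuous_apply (ρ μ0))
    have hGcover : G ⊆ ⋃ μ0, U μ0 := by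
      rintro g ⟨E, hE, rfl⟩
      obtain ⟨μ0, hμ0⟩ := hno' E hE
      exact Set.mem_iUnion.mpr ⟨μ0, hμ0⟩
    obtain ⟨t, ht⟩ := hcpt.elim_finite_subcover U hUopen hGcover
    -- the compact convex set of fidelity vectors
    set ι := {x // x ∈ t}
    set Tm : (Matrix A A ℂ → Matrix B B ℂ) → (ι → ℝ) :=
      fun g i => (star (φ i.1) ⬝ᵥ (g (ρ i.1)).mulVec (φ i.1)).re with hTm
    have hTmcont : Continuous Tm := by
      refine continuous_pi fun i => ?_
      exact Complex.continuous_re.comp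
        (((quadForm (φ i.1)).continuous_of_finiteDimensional).comp (continuous_apply (ρ i.1)))
    set S : Set (ι → ℝ) := Tm '' G with hS
    have hScpt : IsCompact S := hcpt.image hTmcont
    have hTmlin : ∀ (a b : ℝ) (E1 E2 : Matrix A A ℂ →ₗ[ℂ] Matrix B B ℂ),
        Tm ⇑(a • E1 + b • E2) = a • Tm ⇑E1 + b • Tm ⇑E2 := by
      intro a b E1 E2
      funext i
      simp only [hTm, LinearMap.add_apply, LinearMap.smul_apply, Matrix.add_mulVec,
        Matrix.smul_mulVec, dotProduct_add, dotProduct_smul, Pi.add_apply,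
        Pi.smul_apply, Complex.add_re, Complex.smul_re, smul_eq_mul]
    have hSconv : Convex ℝ S := by
      rintro x ⟨gx, ⟨E1, hE1, rfl⟩, rfl⟩ y ⟨gy, ⟨E2, hE2, rfl⟩, rfl⟩ a b ha hb hab
      refine ⟨⇑(a • E1 + b • E2), ⟨a • E1 + b • E2, hconv hE1 hE2 ha hb hab, rfl⟩, ?_⟩
      rw [hTmlin]
    set Q : Set (ι → ℝ) := {x | ∀ i, 1 - ε ≤ x i} with hQ
    have hQconv : Convex ℝ Q := by
      rintro x hx y hy a b ha hb hab i
      simp only [Pi.add_apply, Pi.smul_apply, smul_eq_mul]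
      nlinarith [hx i, hy i]
    have hQclosed : IsClosed Q := by
      have : Q = ⋂ i, {x : ι → ℝ | 1 - ε ≤ x i} := by
        ext x; simp [hQ]
      rw [this]
      exact isClosed_iInter fun i => isClosed_le continuous_const (continuous_apply i)
    have hdisj : Disjoint S Q := by
      rw [Set.disjoint_left]
      rintro x ⟨g, hg, rfl⟩ hxQ
      have := ht hg
      rw [Set.mem_iUnion₂] at this
      obtain ⟨μ0, hμ0t, hμ0⟩ := this
      have h1 : (star (φ μ0) ⬝ᵥ (g (ρ μ0)).mulVec (φ μ0)).re < 1 - ε := hμ0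
      have h2 : 1 - ε ≤ Tm g ⟨μ0, hμ0t⟩ := hxQ ⟨μ0, hμ0t⟩
      simp only [hTm] at h2
      linarith
    obtain ⟨f, u, v, hfS, huv, hfQ⟩ :=
      geometric_hahn_banach_compact_closed hSconv hScpt hQconv hQclosed hdisj
    -- coefficients
    set a : ι → ℝ := fun i => f (Pi.single i 1) with ha
    have hlin : ∀ x : ι → ℝ, f x = ∑ i, x i * a i := by
      intro x
      conv_lhs => rw [← Finset.univ_sum_single x]
      rw [map_sum]
      refine Finset.sum_congr rfl fun i _ => ?_
      rw [show Pi.single i (x i) = x i • (Pi.single i 1 : ι → ℝ) from by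
        funext j; simp [Pi.single_apply, mul_ite], _root_.map_smul, smul_eq_mul]
    set q0 : ι → ℝ := fun _ => 1 - ε with hq0
    have hq0Q : q0 ∈ Q := fun i => le_refl _
    have hq0v : v < f q0 := hfQ q0 hq0Q
    have hanneg : ∀ i, 0 ≤ a i := by
      intro i
      by_contra hai
      push_neg at hai
      set m : ℝ := (f q0 - v + 1) / (-(a i)) with hm
      have hmnn : 0 ≤ m := div_nonneg (by linarith) (by linarith)
      have hinQ : q0 + m • (Pi.single i 1 : ι → ℝ) ∈ Q := by
        intro j
        rcases eq_or_ne i j with rfl | hij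
        · simp only [Pi.add_apply, Pi.smul_apply, Pi.single_eq_same, smul_eq_mul, mul_one, hq0]
          linarith
        · simp [Pi.single_eq_of_ne (Ne.symm hij), hq0]
      have hv := hfQ _ hinQ
      rw [map_add, _root_.map_smul, smul_eq_mul,
        show f (Pi.single i 1 : ι → ℝ) = a i from rfl] at hv
      have h0 : a i ≠ 0 := ne_of_lt hai
      have : m * a i = -(f q0 - v + 1) := by
        rw [hm]
        field_simp
      rw [this] at hv
      linarith
    set T : ℝ := ∑ i, a i with hT
    have hTnn : 0 ≤ T := Finset.sum_nonneg fun i _ => hanneg i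
    have hfq0 : f q0 = (1 - ε) * T := by
      rw [hlin q0, hT, Finset.mul_sum]
    have hTpos : 0 < T := by
      rcases lt_or_eq_of_le hTnn with h | h
      · exact h
      · exfalso
        have hz : ∀ i, a i = 0 := by
          intro i
          have := (Finset.sum_eq_zero_iff_of_nonneg (fun i _ => hanneg i)).mp h.symm
          exact this i (Finset.mem_univ i)
        have hf0 : ∀ x, f x = 0 := by
          intro x; rw [hlin x]
          simp [hz]
        obtain ⟨E0, hE0⟩ := hne
        have hs0 : Tm ⇑E0 ∈ S := ⟨⇑E0, ⟨E0, hE0, rfl⟩, rfl⟩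
        have := hfS _ hs0
        rw [hf0] at this
        rw [hf0] at hq0v
        linarith
    -- the probability measure
    set w : ι → ℝ := fun i => a i / T with hw
    have hwnn : ∀ i, 0 ≤ w i := fun i => div_nonneg (hanneg i) hTnn
    set p : Measure Λ := ∑ i : ι, (ENNReal.ofReal (w i)) • Measure.dirac (i.1 : Λ) with hp
    have hptot : p Set.univ = 1 := by
      rw [hp]
      rw [show (∑ i : ι, (ENNReal.ofReal (w i)) • Measure.dirac (i.1 : Λ)) Set.univ
          = ∑ i : ι, ((ENNReal.ofReal (w i)) • Measure.dirac (i.1 : Λ)) Set.univ from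
        Measure.finset_sum_apply _ _ _]
      simp only [Measure.smul_apply, measure_univ, smul_eq_mul, mul_one]
      rw [← ENNReal.ofReal_sum_of_nonneg (fun i _ => hwnn i)]
      rw [show ∑ i, w i = 1 by rw [hw]; simp only []; rw [← Finset.sum_div, ← hT, div_self hTpos.ne']]
      simp
    have hpprob : IsProbabilityMeasure p := ⟨hptot⟩
    -- compute integrals against p
    have hint : ∀ E : Matrix A A ℂ →ₗ[ℂ] Matrix B B ℂ,
        ∫ μ, F E μ ∂p = ∑ i : ι, w i * F E i.1 := by
      intro E
      have hsm : StronglyMeasurable (F E) := (hFcont E).stronglyMeasurable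
      have hintd : ∀ i : ι, Integrable (F E) ((ENNReal.ofReal (w i)) • Measure.dirac (i.1 : Λ)) := by
        intro i
        exact (integrable_of_cont _ (hFcont E) _).smul_measure ENNReal.ofReal_ne_top
      rw [hp, integral_finset_sum_measure (fun i _ => hintd i)]
      refine Finset.sum_congr rfl fun i _ => ?_
      rw [integral_smul_measure, integral_dirac' _ _ hsm, ENNReal.toReal_ofReal (hwnn i),
        smul_eq_mul]
    -- each value is < u / T
    have hub : ∀ r ∈ {r : ℝ | ∃ E ∈ O,
        r = ∫ μ, (star (φ μ) ⬝ᵥ (E (ρ μ)).mulVec (φ μ)).re ∂p}, r ≤ u / T := by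
      rintro r ⟨E, hE, rfl⟩
      have hval : (∫ μ, F E μ ∂p) = (1 / T) * f (Tm ⇑E) := by
        rw [hint E, hlin]
        rw [Finset.mul_sum]
        refine Finset.sum_congr rfl fun i _ => ?_
        have : Tm ⇑E i = F E i.1 := rfl
        rw [this, hw]
        ring
      have hSmem : Tm ⇑E ∈ S := ⟨⇑E, ⟨E, hE, rfl⟩, rfl⟩
      have := hfS _ hSmem
      show (∫ μ, F E μ ∂p) ≤ u / T
      rw [hval]
      have h1T : (0:ℝ) < 1 / T := by positivity
      calc (1 / T) * f (Tm ⇑E) ≤ (1 / T) * u := by nlinarith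
        _ = u / T := by ring
    have hnonempty : {r : ℝ | ∃ E ∈ O,
        r = ∫ μ, (star (φ μ) ⬝ᵥ (E (ρ μ)).mulVec (φ μ)).re ∂p}.Nonempty := by
      obtain ⟨E0, hE0⟩ := hne
      exact ⟨_, E0, hE0, rfl⟩
    have hsup := csSup_le hnonempty hub
    have hH := H p hpprob
    have huT : u / T < 1 - ε := by
      rw [div_lt_iff₀ hTpos]
      have : v < (1 - ε) * T := by rw [← hfq0]; exact hq0v
      linarith
    have : (1 - ε : ℝ) ≤ u / T := le_trans hH hsup
    linarith


end
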